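/- Let L be a frame and S ⊆ L a sublocale, and suppose 𝒮 is a collection of sublocales of L closed under arbitrary joins (in the coframe of sublocales) and stable under the operations T ↦ T ∩ c(x) and T ↦ T ∩ o(x) for all x ∈ L, where c(x) and o(x) are the closed and open sublocales. Then for every S ∈ 𝒮 and every sublocale T of L, the coframe difference S ∖ T belongs to 𝒮. -/
import Mathlib

/-- A sublocale of a frame: a subset closed under all meets and under `x ⇨ -`. -/
def IsSublocale {L : Type*} [Order.Frame L] (S : Set L) : Prop :=
  (∀ T : Set L, T ⊆ S → sInf T ∈ S) ∧ ∀ x : L, ∀ s ∈ S, x ⇨ s ∈ S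

/-- The join of a family of sublocales in the coframe of sublocales: the set of all
meets of subsets of the union. -/
def slJoin {L : Type*} [Order.Frame L] (𝒜 : Set (Set L)) : Set L :=
  {a : L | ∃ T : Set L, T ⊆ ⋃₀ 𝒜 ∧ a = sInf T}

/-- The open sublocale `o(a) = {a ⇨ b | b ∈ L}`. -/
def oSub {L : Type*} [Order.Frame L] (a : L) : Set L :=
  {b : L | ∃ c : L, b = a ⇨ c}

/-- The closed sublocale `c(a) = ↑a`. -/
def cSub {L : Type*} [Order.Frame L] (a : L) : Set L := Set.Ici a

/-- The coframe difference `S ∖ T = ⋂{U sublocale | S ⊆ T ∨ U}`. -/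
def slDiff {L : Type*} [Order.Frame L] (S T : Set L) : Set L :=
  ⋂₀ {U : Set L | IsSublocale U ∧ S ⊆ slJoin {T, U}}

section Aux

variable {L : Type*} [Order.Frame L]

lemma himp_sInf' (a : L) (Q : Set L) : a ⇨ sInf Q = sInf ((a ⇨ ·) '' Q) := by
  apply le_antisymm
  · exact le_sInf (by rintro _ ⟨q, hq, rfl⟩; exact himp_le_himp_left (sInf_le hq))
  · rw [le_himp_iff]
    refine le_sInf fun q hq => ?_
    calc sInf ((a ⇨ ·) '' Q) ⊓ a ≤ (a ⇨ q) ⊓ a :=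
          inf_le_inf_right a (sInf_le ⟨q, hq, rfl⟩)
      _ ≤ q := by rw [inf_comm]; exact inf_himp_le

lemma isSublocale_slJoin {𝒜 : Set (Set L)} (h : ∀ A ∈ 𝒜, IsSublocale A) :
    IsSublocale (slJoin 𝒜) := by
  constructor
  · intro T hT
    refine ⟨⋃₀ {Q | Q ⊆ ⋃₀ 𝒜 ∧ sInf Q ∈ T}, fun a ha => ?_, ?_⟩
    · obtain ⟨Q, ⟨hQ1, _⟩, haQ⟩ := ha
      exact hQ1 haQ
    · apply le_antisymm
      · refine le_sInf ?_
        rintro a ⟨Q, ⟨hQ1, hQ2⟩, haQ⟩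
        exact le_trans (sInf_le hQ2) (sInf_le haQ)
      · refine le_sInf fun t ht => ?_
        obtain ⟨Q, hQ, rfl⟩ := hT ht
        exact sInf_le_sInf (Set.subset_sUnion_of_mem ⟨hQ, ht⟩)
  · rintro x t ⟨Q, hQ, rfl⟩
    refine ⟨(x ⇨ ·) '' Q, ?_, himp_sInf' x Q⟩
    rintro _ ⟨q, hq, rfl⟩
    obtain ⟨A, hA, hqA⟩ := hQ hq
    exact ⟨A, hA, (h A hA).2 x q hqA⟩

lemma mem_slJoin_self {𝒜 : Set (Set L)} {a : L} (ha : a ∈ ⋃₀ 𝒜) : a ∈ slJoin 𝒜 :=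
  ⟨{a}, by simpa using ha, by simp⟩

lemma isSublocale_cSub (a : L) : IsSublocale (cSub a) := by
  constructor
  · intro T hT
    exact le_sInf fun t ht => hT ht
  · intro x s hs
    exact le_trans hs le_himp

lemma isSublocale_oSub (a : L) : IsSublocale (oSub a) := by
  constructor
  · intro T hT
    have hfix : ∀ t ∈ T, a ⇨ t = t := by
      intro t ht
      obtain ⟨c, rfl⟩ := hT ht
      rw [himp_himp, inf_idem]
    refine ⟨sInf T, ?_⟩
    have h2 : a ⇨ sInf T ≤ sInf T := by
      refine le_sInf fun t ht => le_trans (himp_le_himp_left (sInf_le ht)) ?_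
      rw [hfix t ht]
    exact (le_antisymm h2 le_himp).symm
  · intro x s hs
    obtain ⟨c, rfl⟩ := hs
    exact ⟨x ⇨ c, by rw [himp_left_comm]⟩

lemma isSublocale_inter {A B : Set L} (hA : IsSublocale A) (hB : IsSublocale B) :
    IsSublocale (A ∩ B) := by
  constructor
  · intro T hT
    exact ⟨hA.1 T fun t ht => (hT ht).1, hB.1 T fun t ht => (hT ht).2⟩
  · intro x s hs
    exact ⟨hA.2 x s hs.1, hB.2 x s hs.2⟩

end Aux

/-- If `𝒮` is a collection of sublocales closed under arbitrary joins and stable under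
intersecting with closed and open sublocales, then `𝒮` is stable under coframe
differences `S ∖ T` for `S ∈ 𝒮` and `T` any sublocale. -/
theorem stmt19 {L : Type*} [Order.Frame L] (𝒮 : Set (Set L))
    (h𝒮 : ∀ S ∈ 𝒮, IsSublocale S)
    (hJoins : ∀ 𝒜 : Set (Set L), 𝒜 ⊆ 𝒮 → slJoin 𝒜 ∈ 𝒮)
    (hCl : ∀ S ∈ 𝒮, ∀ x : L, S ∩ cSub x ∈ 𝒮)
    (hOp : ∀ S ∈ 𝒮, ∀ x : L, S ∩ oSub x ∈ 𝒮)
    (S : Set L) (hS : S ∈ 𝒮) (T : Set L) (hT : IsSublocale T) :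
    slDiff S T ∈ 𝒮 := by
  classical
  -- the nucleus of T
  set ν : L → L := fun x => sInf (T ∩ Set.Ici x) with hν
  have hνT : ∀ x, ν x ∈ T := fun x => hT.1 _ Set.inter_subset_left
  have hxν : ∀ x, x ≤ ν x := fun x => le_sInf fun t ht => ht.2
  have hνle : ∀ x, ∀ t ∈ T, x ≤ t → ν x ≤ t := fun x t ht hxt => sInf_le ⟨ht, hxt⟩
  -- the family of generators
  set 𝒜 : Set (Set L) := {A | ∃ x : L, A = (S ∩ cSub x) ∩ oSub (ν x)} with h𝒜
  have h𝒜sub : 𝒜 ⊆ 𝒮 := by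
    rintro _ ⟨x, rfl⟩
    exact hOp _ (hCl S hS x) (ν x)
  have h𝒜sl : ∀ A ∈ 𝒜, IsSublocale A := fun A hA => h𝒮 A (h𝒜sub hA)
  set W := slJoin 𝒜 with hW
  have hW𝒮 : W ∈ 𝒮 := hJoins 𝒜 h𝒜sub
  have hWsl : IsSublocale W := isSublocale_slJoin h𝒜sl
  -- S ⊆ T ∨ W
  have hSTW : S ⊆ slJoin {T, W} := by
    intro s hs
    refine ⟨{ν s, ν s ⇨ s}, ?_, ?_⟩
    · rintro a (rfl | rfl)
      · exact ⟨T, Or.inl rfl, hνT s⟩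
      · refine ⟨W, Or.inr rfl, mem_slJoin_self ⟨(S ∩ cSub s) ∩ oSub (ν s), ⟨s, rfl⟩, ?_⟩⟩
        exact ⟨⟨(h𝒮 S hS).2 (ν s) s hs, le_himp⟩, ⟨s, rfl⟩⟩
    · rw [sInf_pair, inf_himp, inf_eq_right.mpr (hxν s)]
  -- key: each generator is contained in every competitor U
  have hKey : ∀ U : Set L, IsSublocale U → S ⊆ slJoin {T, U} →
      ∀ x : L, (S ∩ cSub x) ∩ oSub (ν x) ⊆ U := by
    intro U hU hSU x s hsmem
    obtain ⟨⟨hsS, hxs⟩, c, hsc⟩ := hsmem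
    have hfix : ν x ⇨ s = s := by rw [hsc, himp_himp, inf_idem]
    obtain ⟨Q, hQ, hsQ⟩ := hSU hsS
    have hQ' : Q ⊆ T ∪ U := by
      intro q hq
      obtain ⟨A, hA, hqA⟩ := hQ hq
      rcases hA with rfl | hA
      · exact Or.inl hqA
      · rcases hA with rfl
        exact Or.inr hqA
    have hQsplit : Q = (Q ∩ T) ∪ (Q ∩ U) := by
      ext q; constructor
      · intro hq; rcases hQ' hq with h | h
        · exact Or.inl ⟨hq, h⟩
        · exact Or.inr ⟨hq, h⟩
      · rintro (⟨h, _⟩ | ⟨h, _⟩) <;> exact h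
    set q1 := sInf (Q ∩ T) with hq1
    set q2 := sInf (Q ∩ U) with hq2
    have hs12 : s = q1 ⊓ q2 := by rw [hsQ, hQsplit, sInf_union]
    have hq1T : q1 ∈ T := hT.1 _ Set.inter_subset_right
    have hq2U : q2 ∈ U := hU.1 _ Set.inter_subset_right
    have hνq1 : ν x ≤ q1 := hνle x q1 hq1T (le_trans hxs (hs12 ▸ inf_le_left))
    have hq2s : q2 ≤ s := by
      rw [← hfix, le_himp_iff]
      calc q2 ⊓ ν x ≤ q2 ⊓ q1 := inf_le_inf_left _ hνq1
        _ = s := by rw [inf_comm, ← hs12]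
    have : s = q2 := le_antisymm (hs12 ▸ inf_le_right) hq2s
    exact this ▸ hq2U
  -- slDiff S T = W
  have hEq : slDiff S T = W := by
    apply le_antisymm
    · exact Set.sInter_subset_of_mem ⟨hWsl, hSTW⟩
    · intro w hw
      obtain ⟨Q, hQ, rfl⟩ := hw
      intro U hU
      obtain ⟨hUsl, hSU⟩ := hU
      refine hUsl.1 Q fun q hq => ?_
      obtain ⟨A, ⟨x, rfl⟩, hqA⟩ := hQ hq
      exact hKey U hUsl hSU x hqA
  rw [hEq]
  exact hW𝒮
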